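/- Improved accuracy bound for the truncated randomized SVD: let A ∈ ℝ^{m×n}, let k ≥ 1 and p ≥ 0 be integers with ℓ := k + p ≤ min{m, n}, and let P ∈ ℝ^{m×ℓ} have orthonormal columns. Set B := PᵀA ∈ ℝ^{ℓ×n}, let B_(k) be a best rank-k approximation of B in spectral norm (rank B_(k) ≤ k and ‖B − B_(k)‖ ≤ ‖B − D‖ for every D of rank ≤ k), and set A_(k) := P B_(k). Then ‖A − A_(k)‖ ≤ σ_{k+1}(B) + ‖(I_m − PPᵀ)A‖, and moreover σ_{m−p+1}(A) ≤ σ_{k+1}(B) ≤ σ_{k+1}(A). -/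
import Mathlib


open Matrix

/-- Spectral norm (largest singular value) of a real matrix. -/
noncomputable def specNorm {a b : ℕ} (M : Matrix (Fin a) (Fin b) ℝ) : ℝ :=
  ‖LinearMap.toContinuousLinearMap (Matrix.toEuclideanLin M)‖

/-- The `j`-th largest singular value of a real matrix (`j ≥ 1`), characterized via the
Eckart–Young theorem as the minimal spectral-norm distance to matrices of rank `< j`;
it is `0` when `j` exceeds the smaller dimension. -/
noncomputable def singVal {a b : ℕ} (M : Matrix (Fin a) (Fin b) ℝ) (j : ℕ) : ℝ :=
  sInf {r : ℝ | ∃ D : Matrix (Fin a) (Fin b) ℝ, D.rank < j ∧ r = specNorm (M - D)}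

/-- The matrix of the first `k` columns of `M`. -/
def colSub {a b : ℕ} (M : Matrix (Fin a) (Fin b) ℝ) (k : ℕ) (hk : k ≤ b) :
    Matrix (Fin a) (Fin k) ℝ :=
  M.submatrix id fun j => ⟨j.1, lt_of_lt_of_le j.2 hk⟩

/-- The leading `r × c` submatrix of `M`. -/
def subUL {a b : ℕ} (M : Matrix (Fin a) (Fin b) ℝ) (r c : ℕ) (hr : r ≤ a) (hc : c ≤ b) :
    Matrix (Fin r) (Fin c) ℝ :=
  M.submatrix (fun i => ⟨i.1, lt_of_lt_of_le i.2 hr⟩) (fun j => ⟨j.1, lt_of_lt_of_le j.2 hc⟩)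


open scoped Matrix.Norms.L2Operator in
lemma specNorm_eq_norm {a b : ℕ} (M : Matrix (Fin a) (Fin b) ℝ) : specNorm M = ‖M‖ := rfl

open scoped Matrix.Norms.L2Operator in
lemma singVal_le_norm {a b : ℕ} (M D : Matrix (Fin a) (Fin b) ℝ) {j : ℕ} (hD : D.rank < j) :
    singVal M j ≤ ‖M - D‖ := by
  apply csInf_le
  · exact ⟨0, fun r ⟨E, _, hr⟩ => by rw [hr, specNorm_eq_norm]; exact norm_nonneg _⟩
  · exact ⟨D, hD, (specNorm_eq_norm _).symm⟩

open scoped Matrix.Norms.L2Operator in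
lemma le_singVal_of_forall {a b : ℕ} {M : Matrix (Fin a) (Fin b) ℝ} {j : ℕ} (hj : 0 < j) {c : ℝ}
    (h : ∀ D : Matrix (Fin a) (Fin b) ℝ, D.rank < j → c ≤ ‖M - D‖) :
    c ≤ singVal M j := by
  refine le_csInf ⟨specNorm (M - 0), 0, by simpa using hj, rfl⟩ ?_
  rintro r ⟨D, hD, rfl⟩
  rw [specNorm_eq_norm]
  exact h D hD

open scoped Matrix.Norms.L2Operator in
lemma norm_one_le_one {l : ℕ} : ‖(1 : Matrix (Fin l) (Fin l) ℝ)‖ ≤ 1 := by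
  rw [Matrix.cstar_norm_def, _root_.map_one]
  exact ContinuousLinearMap.norm_id_le

open scoped Matrix.Norms.L2Operator in
lemma norm_orth_le_one {a l : ℕ} (P : Matrix (Fin a) (Fin l) ℝ) (hP : Pᵀ * P = 1) :
    ‖P‖ ≤ 1 := by
  have h := Matrix.l2_opNorm_conjTranspose_mul_self P
  rw [P.conjTranspose_eq_transpose_of_trivial, hP] at h
  nlinarith [norm_nonneg P, norm_one_le_one (l := l)]

open scoped Matrix.Norms.L2Operator in
lemma norm_orth_tr_le_one {a l : ℕ} (P : Matrix (Fin a) (Fin l) ℝ) (hP : Pᵀ * P = 1) :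
    ‖Pᵀ‖ ≤ 1 := by
  rw [← P.conjTranspose_eq_transpose_of_trivial, Matrix.l2_opNorm_conjTranspose]
  exact norm_orth_le_one P hP

open scoped Matrix.Norms.L2Operator in
lemma norm_orth_mul {a l c : ℕ} (P : Matrix (Fin a) (Fin l) ℝ) (hP : Pᵀ * P = 1)
    (M : Matrix (Fin l) (Fin c) ℝ) : ‖P * M‖ = ‖M‖ := by
  refine le_antisymm ?_ ?_
  · calc ‖P * M‖ ≤ ‖P‖ * ‖M‖ := Matrix.l2_opNorm_mul P M
      _ ≤ 1 * ‖M‖ := mul_le_mul_of_nonneg_right (norm_orth_le_one P hP) (norm_nonneg _)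
      _ = ‖M‖ := one_mul _
  · have hMeq : Pᵀ * (P * M) = M := by rw [← Matrix.mul_assoc, hP, Matrix.one_mul]
    calc ‖M‖ = ‖Pᵀ * (P * M)‖ := by rw [hMeq]
      _ ≤ ‖Pᵀ‖ * ‖P * M‖ := Matrix.l2_opNorm_mul _ _
      _ ≤ 1 * ‖P * M‖ := mul_le_mul_of_nonneg_right (norm_orth_tr_le_one P hP) (norm_nonneg _)
      _ = ‖P * M‖ := one_mul _

lemma matrix_rank_add_le {a b : ℕ} (X Y : Matrix (Fin a) (Fin b) ℝ) :
    (X + Y).rank ≤ X.rank + Y.rank := by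
  unfold Matrix.rank
  rw [Matrix.mulVecLin_add]
  have hle : LinearMap.range (X.mulVecLin + Y.mulVecLin) ≤
      LinearMap.range X.mulVecLin ⊔ LinearMap.range Y.mulVecLin := by
    rintro v ⟨u, rfl⟩
    exact Submodule.add_mem_sup ⟨u, rfl⟩ ⟨u, rfl⟩
  exact (Submodule.finrank_mono hle).trans
    (Submodule.finrank_add_le_finrank_add_finrank _ _)

lemma rank_orth {a l : ℕ} (P : Matrix (Fin a) (Fin l) ℝ) (hP : Pᵀ * P = 1) :
    P.rank = l := by
  refine le_antisymm (P.rank_le_width) ?_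
  calc l = (1 : Matrix (Fin l) (Fin l) ℝ).rank := by simp
    _ = (Pᵀ * P).rank := by rw [hP]
    _ ≤ P.rank := Matrix.rank_mul_le_right _ _

lemma rank_one_sub_proj {a l : ℕ} (P : Matrix (Fin a) (Fin l) ℝ) (hP : Pᵀ * P = 1) :
    ((1 : Matrix (Fin a) (Fin a) ℝ) - P * Pᵀ).rank + l ≤ a := by
  set Q := (1 : Matrix (Fin a) (Fin a) ℝ) - P * Pᵀ with hQ
  have hzero : Pᵀ * Q = 0 := by
    rw [hQ, Matrix.mul_sub, Matrix.mul_one, ← Matrix.mul_assoc, hP, Matrix.one_mul, sub_self]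
  have hrange : LinearMap.range Q.mulVecLin ≤ LinearMap.ker (Pᵀ.mulVecLin) := by
    rintro v ⟨u, rfl⟩
    have : (Pᵀ * Q).mulVecLin u = 0 := by rw [hzero, Matrix.mulVecLin_zero]; rfl
    rw [Matrix.mulVecLin_mul] at this
    exact this
  have h1 : Q.rank ≤ Module.finrank ℝ (LinearMap.ker (Pᵀ.mulVecLin)) :=
    Submodule.finrank_mono hrange
  have h2 : Pᵀ.rank + Module.finrank ℝ (LinearMap.ker (Pᵀ.mulVecLin)) = a := by
    have := LinearMap.finrank_range_add_finrank_ker (Pᵀ.mulVecLin)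
    simpa [Matrix.rank] using this
  have h3 : Pᵀ.rank = l := by rw [Matrix.rank_transpose, rank_orth P hP]
  omega

/-- improved accuracy bound for the truncated randomized SVD.  With
`ℓ = k + p ≤ min{m,n}`, `P` an `m × ℓ` matrix with orthonormal columns, `B = PᵀA`, and `B_(k)`
a best rank-`k` spectral-norm approximation of `B`, the truncated approximation
`A_(k) = P B_(k)` satisfies `‖A - A_(k)‖ ≤ σ_{k+1}(B) + ‖(I - PPᵀ)A‖` and
`σ_{m-p+1}(A) ≤ σ_{k+1}(B) ≤ σ_{k+1}(A)`. -/
theorem randomized_truncated_svd_error_bound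
    (m n k p : ℕ) (hk : 1 ≤ k) (hl : k + p ≤ min m n)
    (A : Matrix (Fin m) (Fin n) ℝ)
    (P : Matrix (Fin m) (Fin (k + p)) ℝ) (hP : Pᵀ * P = 1)
    (Bk : Matrix (Fin (k + p)) (Fin n) ℝ) (hBkrank : Bk.rank ≤ k)
    (hBkbest : ∀ D : Matrix (Fin (k + p)) (Fin n) ℝ, D.rank ≤ k →
      specNorm (Pᵀ * A - Bk) ≤ specNorm (Pᵀ * A - D)) :
    specNorm (A - P * Bk) ≤ singVal (Pᵀ * A) (k + 1) + specNorm ((1 - P * Pᵀ) * A) ∧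
    singVal A (m - p + 1) ≤ singVal (Pᵀ * A) (k + 1) ∧
    singVal (Pᵀ * A) (k + 1) ≤ singVal A (k + 1) := by
  classical
  open scoped Matrix.Norms.L2Operator in
  have hm : k + p ≤ m := le_trans hl (min_le_left _ _)
  have hPt : ‖Pᵀ‖ ≤ 1 := norm_orth_tr_le_one P hP
  set B := Pᵀ * A with hB
  -- singVal B (k+1) = ‖B - Bk‖
  have hsv : singVal B (k + 1) = ‖B - Bk‖ := by
    refine le_antisymm (singVal_le_norm B Bk (Nat.lt_succ_of_le hBkrank)) ?_
    refine le_singVal_of_forall (Nat.succ_pos k) ?_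
    intro D hD
    have := hBkbest D (Nat.lt_succ_iff.mp hD)
    rwa [specNorm_eq_norm, specNorm_eq_norm] at this
  refine ⟨?_, ?_, ?_⟩
  · -- first bound
    rw [specNorm_eq_norm, specNorm_eq_norm]
    have hdecomp : A - P * Bk = P * (B - Bk) + (1 - P * Pᵀ) * A := by
      rw [hB, Matrix.mul_sub, Matrix.sub_mul, Matrix.one_mul, ← Matrix.mul_assoc]
      abel
    calc ‖A - P * Bk‖ = ‖P * (B - Bk) + (1 - P * Pᵀ) * A‖ := by rw [hdecomp]
      _ ≤ ‖P * (B - Bk)‖ + ‖(1 - P * Pᵀ) * A‖ := norm_add_le _ _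
      _ = singVal B (k + 1) + ‖(1 - P * Pᵀ) * A‖ := by rw [norm_orth_mul P hP, hsv]
  · -- σ_{m-p+1}(A) ≤ σ_{k+1}(B)
    refine le_singVal_of_forall (Nat.succ_pos k) ?_
    intro D hD
    set E := P * D + (1 - P * Pᵀ) * A with hE
    have hrankE : E.rank < m - p + 1 := by
      have h1 : E.rank ≤ (P * D).rank + ((1 - P * Pᵀ) * A).rank := matrix_rank_add_le _ _
      have h2 : (P * D).rank ≤ D.rank := Matrix.rank_mul_le_right _ _
      have h3 : ((1 - P * Pᵀ) * A).rank ≤ (1 - P * Pᵀ).rank := Matrix.rank_mul_le_left _ _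
      have h4 := rank_one_sub_proj P hP
      omega
    have hAE : A - E = P * (B - D) := by
      rw [hE, hB, Matrix.mul_sub, Matrix.sub_mul, Matrix.one_mul, ← Matrix.mul_assoc]
      abel
    calc singVal A (m - p + 1) ≤ ‖A - E‖ := singVal_le_norm A E hrankE
      _ = ‖P * (B - D)‖ := by rw [hAE]
      _ = ‖B - D‖ := norm_orth_mul P hP _
  · -- σ_{k+1}(B) ≤ σ_{k+1}(A)
    have h0 : (0 : Matrix (Fin m) (Fin n) ℝ).rank < k + 1 := by simp
    refine le_csInf ⟨specNorm (A - 0), 0, h0, rfl⟩ ?_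
    rintro r ⟨D, hD, rfl⟩
    rw [specNorm_eq_norm]
    have hrk : (Pᵀ * D).rank < k + 1 := lt_of_le_of_lt (Matrix.rank_mul_le_right _ _) hD
    calc singVal B (k + 1) ≤ ‖B - Pᵀ * D‖ := singVal_le_norm B _ hrk
      _ = ‖Pᵀ * (A - D)‖ := by rw [hB, Matrix.mul_sub]
      _ ≤ ‖Pᵀ‖ * ‖A - D‖ := Matrix.l2_opNorm_mul _ _
      _ ≤ 1 * ‖A - D‖ := mul_le_mul_of_nonneg_right hPt (norm_nonneg _)
      _ = ‖A - D‖ := one_mul _
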